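/- For every nonzero square λ ∈ GF(q), the group G acts transitively on the set of points of the hyperbolic quadric Q_λ not on the conic C; this set has exactly q² + q points, and the stabilizer in G of any of its points has order q − 1. -/

import Mathlib

/-!
Common setting: `PG(3,q)` as the lattice of subspaces of `V = GF(q)⁴`;
the pencil of quadrics `Q_λ : x₁x₃ - x₂² + λx₄² = 0`, the plane `π : x₄ = 0`,
the conic `C = Q_λ ∩ π`, and the group `G ≤ PGL(4,q)` induced by the matrices
`M(a,b,c,d)`.
-/

/-- The quadratic form `F_λ(x) = x₁x₃ - x₂² + λx₄²` on `V = F⁴`. -/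
def Fq (F : Type) [Field F] (lam : F) (v : Fin 4 → F) : F :=
  v 0 * v 2 - v 1 ^ 2 + lam * v 3 ^ 2

/-- The matrix `M(a,b,c,d)`. -/
def Mmat (F : Type) [Field F] (a b c d : F) : Matrix (Fin 4) (Fin 4) F :=
  !![a^2, 2*a*c, c^2, 0;
     a*b, a*d + b*c, c*d, 0;
     b^2, 2*b*d, d^2, 0;
     0,   0,       0,   a*d - b*c]

/-- A point of `PG(3,q)`: a 1-dimensional subspace of `F⁴`. -/
def isPoint (F : Type) [Field F] (P : Submodule F (Fin 4 → F)) : Prop :=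
  Module.finrank F P = 1

/-- A line of `PG(3,q)`: a 2-dimensional subspace of `F⁴`. -/
def isLine (F : Type) [Field F] (l : Submodule F (Fin 4 → F)) : Prop :=
  Module.finrank F l = 2

/-- A plane of `PG(3,q)`: a 3-dimensional subspace of `F⁴`. -/
def isPlane (F : Type) [Field F] (s : Submodule F (Fin 4 → F)) : Prop :=
  Module.finrank F s = 3

/-- The quadric `Q_λ`, as the set of points on which `F_λ` vanishes. -/
def quadric (F : Type) [Field F] (lam : F) : Set (Submodule F (Fin 4 → F)) :=
  {P | isPoint F P ∧ ∀ v ∈ P, Fq F lam v = 0}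

/-- The plane `π : x₄ = 0`. -/
def planePi (F : Type) [Field F] : Submodule F (Fin 4 → F) where
  carrier := {v | v 3 = 0}
  add_mem' := by
    intro a b ha hb
    simp only [Set.mem_setOf_eq, Pi.add_apply] at *
    rw [ha, hb, add_zero]
  zero_mem' := by simp
  smul_mem' := by
    intro c a ha
    simp only [Set.mem_setOf_eq, Pi.smul_apply, smul_eq_mul] at *
    rw [ha, mul_zero]

/-- The point `U₄ = ⟨(0,0,0,1)⟩`. -/
def pointU4 (F : Type) [Field F] : Submodule F (Fin 4 → F) :=
  Submodule.span F {(Pi.single 3 1 : Fin 4 → F)}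

/-- The conic `C = Q_λ ∩ π` (independent of `λ`). -/
def conicC (F : Type) [Field F] : Set (Submodule F (Fin 4 → F)) :=
  {P | P ∈ quadric F 0 ∧ P ≤ planePi F}

/-- The set of points of the quadric `Q_λ` lying on a subspace `l`. -/
def qpts (F : Type) [Field F] (lam : F) (l : Submodule F (Fin 4 → F)) :
    Set (Submodule F (Fin 4 → F)) :=
  {P | P ∈ quadric F lam ∧ P ≤ l}

/-- A line is tangent to `Q_λ` if it contains exactly one of its points. -/
def tangentTo (F : Type) [Field F] (l : Submodule F (Fin 4 → F)) (lam : F) : Prop :=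
  (qpts F lam l).ncard = 1

/-- A line is secant to `Q_λ` if it contains exactly two of its points. -/
def secantTo (F : Type) [Field F] (l : Submodule F (Fin 4 → F)) (lam : F) : Prop :=
  (qpts F lam l).ncard = 2

/-- A line is external to `Q_λ` if it contains none of its points. -/
def externalTo (F : Type) [Field F] (l : Submodule F (Fin 4 → F)) (lam : F) : Prop :=
  (qpts F lam l).ncard = 0

/-- `L₁`: lines of `π` tangent to `C`. -/
def lineL1 (F : Type) [Field F] : Set (Submodule F (Fin 4 → F)) :=
  {l | isLine F l ∧ l ≤ planePi F ∧ ({P | P ∈ conicC F ∧ P ≤ l}).ncard = 1}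

/-- `L₂`: lines of `π` external to `C`. -/
def lineL2 (F : Type) [Field F] : Set (Submodule F (Fin 4 → F)) :=
  {l | isLine F l ∧ l ≤ planePi F ∧ ({P | P ∈ conicC F ∧ P ≤ l}).ncard = 0}

/-- `L₃`: lines of `π` secant to `C`. -/
def lineL3 (F : Type) [Field F] : Set (Submodule F (Fin 4 → F)) :=
  {l | isLine F l ∧ l ≤ planePi F ∧ ({P | P ∈ conicC F ∧ P ≤ l}).ncard = 2}

/-- `E`: the external points of `C` in `π` (on exactly two tangent lines of `C`). -/
def setE (F : Type) [Field F] : Set (Submodule F (Fin 4 → F)) :=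
  {P | isPoint F P ∧ P ≤ planePi F ∧ P ∉ conicC F ∧
    ({m | m ∈ lineL1 F ∧ P ≤ m}).ncard = 2}

/-- `I`: the internal points of `C` in `π` (on no tangent line of `C`). -/
def setI (F : Type) [Field F] : Set (Submodule F (Fin 4 → F)) :=
  {P | isPoint F P ∧ P ≤ planePi F ∧ P ∉ conicC F ∧
    ({m | m ∈ lineL1 F ∧ P ≤ m}).ncard = 0}

/-- `L₁'`: the lines through `U₄` contained in the cone `Q₀`. -/
def lineL1' (F : Type) [Field F] : Set (Submodule F (Fin 4 → F)) :=
  {l | isLine F l ∧ pointU4 F ≤ l ∧ ∀ v ∈ l, Fq F 0 v = 0}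

/-- `L₂'`: the lines through `U₄` meeting `π` in a point of `I`. -/
def lineL2' (F : Type) [Field F] : Set (Submodule F (Fin 4 → F)) :=
  {l | isLine F l ∧ pointU4 F ≤ l ∧ (l ⊓ planePi F) ∈ setI F}

/-- `L₃'`: the lines through `U₄` meeting `π` in a point of `E`. -/
def lineL3' (F : Type) [Field F] : Set (Submodule F (Fin 4 → F)) :=
  {l | isLine F l ∧ pointU4 F ≤ l ∧ (l ⊓ planePi F) ∈ setE F}

/-- `L₄`: the lines not through `U₄`, tangent to the cone `Q₀`, meeting `π` in a
point of `E`. -/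
def lineL4 (F : Type) [Field F] : Set (Submodule F (Fin 4 → F)) :=
  {l | isLine F l ∧ ¬ pointU4 F ≤ l ∧ tangentTo F l 0 ∧ (l ⊓ planePi F) ∈ setE F}

/-- `L₄'`: the lines meeting `π` in exactly one point, lying on `C`, and secant to
every quadric `Q_λ`. -/
def lineL4' (F : Type) [Field F] : Set (Submodule F (Fin 4 → F)) :=
  {l | isLine F l ∧ (l ⊓ planePi F) ∈ conicC F ∧ ∀ lam : F, secantTo F l lam}

/-- The collineations of `PG(3,q)` induced by the matrices `M(a,b,c,d)`,
`ad - bc ≠ 0`, acting on subspaces. -/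
def Gcoll (F : Type) [Field F] : Set (Equiv.Perm (Submodule F (Fin 4 → F))) :=
  {σ | ∃ a b c d : F, a * d - b * c ≠ 0 ∧
    ∃ e : (Fin 4 → F) ≃ₗ[F] (Fin 4 → F),
      (∀ v, e v = (Mmat F a b c d).mulVec v) ∧
      ∀ W : Submodule F (Fin 4 → F), σ W = W.map e.toLinearMap}

/-- The group `G ≃ PGL(2,q)`, as a group of collineations of `PG(3,q)`. -/
def G (F : Type) [Field F] : Subgroup (Equiv.Perm (Submodule F (Fin 4 → F))) :=
  Subgroup.closure (Gcoll F)

/-- `A = L₁' ∪ L₂' ∪ L₃ ∪ L₄'`. -/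
def setA (F : Type) [Field F] : Set (Submodule F (Fin 4 → F)) :=
  lineL1' F ∪ lineL2' F ∪ lineL3 F ∪ lineL4' F

/-- `B = L₁ ∪ L₂ ∪ L₃' ∪ L₄`. -/
def setB (F : Type) [Field F] : Set (Submodule F (Fin 4 → F)) :=
  lineL1 F ∪ lineL2 F ∪ lineL3' F ∪ lineL4 F

/-- `S_ℓ`: the lines of `S` meeting the line `ℓ` (in at least a point). -/
def linesMeeting (F : Type) [Field F] (S : Set (Submodule F (Fin 4 → F)))
    (l : Submodule F (Fin 4 → F)) : Set (Submodule F (Fin 4 → F)) :=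
  {r | r ∈ S ∧ r ⊓ l ≠ ⊥}

/-- A spread of `PG(3,q)`: `q² + 1` pairwise disjoint lines. -/
def isSpread (F : Type) [Field F] (q : ℕ) (S : Set (Submodule F (Fin 4 → F))) : Prop :=
  (∀ l ∈ S, isLine F l) ∧ S.ncard = q ^ 2 + 1 ∧
    ∀ l ∈ S, ∀ l' ∈ S, l ≠ l' → l ⊓ l' = ⊥

/-- A Cameron–Liebler line class with parameter `x`: a set of lines meeting every
spread in exactly `x` lines. -/
def isCameronLiebler (F : Type) [Field F] (q x : ℕ)
    (L : Set (Submodule F (Fin 4 → F))) : Prop :=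
  (∀ l ∈ L, isLine F l) ∧ ∀ S, isSpread F q S → (L ∩ S).ncard = x

/-- `O_n`: the points off `Q_λ` at which `F_λ` evaluates to a nonsquare. -/
def setOn (F : Type) [Field F] (lam : F) : Set (Submodule F (Fin 4 → F)) :=
  {P | isPoint F P ∧ ∀ v ∈ P, v ≠ 0 → ¬ IsSquare (Fq F lam v)}

/-- `O_s`: the points off `Q_λ` at which `F_λ` evaluates to a nonzero square. -/
def setOs (F : Type) [Field F] (lam : F) : Set (Submodule F (Fin 4 → F)) :=
  {P | isPoint F P ∧ ∀ v ∈ P, v ≠ 0 → Fq F lam v ≠ 0 ∧ IsSquare (Fq F lam v)}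

/-- `T`: the tangent lines to `Q_λ` all of whose points off `Q_λ` lie in `O_n`. -/
def setT (F : Type) [Field F] (lam : F) : Set (Submodule F (Fin 4 → F)) :=
  {l | isLine F l ∧ tangentTo F l lam ∧
    ∀ P, isPoint F P → P ≤ l → P ∉ quadric F lam → P ∈ setOn F lam}

/-- `S`: the secant lines to `Q_λ`. -/
def setS (F : Type) [Field F] (lam : F) : Set (Submodule F (Fin 4 → F)) :=
  {l | isLine F l ∧ secantTo F l lam}

/-- The symmetric bilinear form obtained by polarizing `F_λ`. -/
def polarFq (F : Type) [Field F] (lam : F) (u v : Fin 4 → F) : F :=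
  Fq F lam (u + v) - Fq F lam u - Fq F lam v

theorem polarFq_eq (F : Type) [Field F] (lam : F) (u v : Fin 4 → F) :
    polarFq F lam u v =
      u 0 * v 2 + u 2 * v 0 - 2 * (u 1 * v 1) + lam * (2 * (u 3 * v 3)) := by
  simp only [polarFq, Fq, Pi.add_apply]
  ring

/-- `W^{⊥_λ}`: the orthogonal complement of a subspace `W` with respect to the
symmetric bilinear form obtained by polarizing `F_λ`. -/
def perpLam (F : Type) [Field F] (lam : F) (W : Submodule F (Fin 4 → F)) :
    Submodule F (Fin 4 → F) where
  carrier := {v | ∀ u ∈ W, polarFq F lam u v = 0}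
  add_mem' := by
    intro x y hx hy u hu
    have h1 := hx u hu
    have h2 := hy u hu
    rw [polarFq_eq] at h1 h2 ⊢
    simp only [Pi.add_apply]
    linear_combination h1 + h2
  zero_mem' := by
    intro u hu
    rw [polarFq_eq]
    simp
  smul_mem' := by
    intro c x hx u hu
    have h1 := hx u hu
    rw [polarFq_eq] at h1 ⊢
    simp only [Pi.smul_apply, smul_eq_mul]
    linear_combination c * h1

section Helpers
variable {F : Type} [Field F]

theorem Mmat_mulVec (a b c d : F) (v : Fin 4 → F) :
    (Mmat F a b c d).mulVec v =
      ![a^2 * v 0 + 2*a*c * v 1 + c^2 * v 2,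
        a*b * v 0 + (a*d + b*c) * v 1 + c*d * v 2,
        b^2 * v 0 + 2*b*d * v 1 + d^2 * v 2,
        (a*d - b*c) * v 3] := by
  funext i
  fin_cases i <;>
    simp [Mmat, Matrix.mulVec, dotProduct, Fin.sum_univ_four] <;> ring

theorem Mmat_mul (a b c d a' b' c' d' : F) :
    Mmat F a b c d * Mmat F a' b' c' d' =
      Mmat F (a*a' + c*b') (b*a' + d*b') (a*c' + c*d') (b*c' + d*d') := by
  ext i j
  fin_cases i <;> fin_cases j <;>
    simp [Mmat, Matrix.mul_apply, Fin.sum_univ_four] <;> ring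

end Helpers
section Helpers2
variable {F : Type} [Field F]

theorem Mmat_smul (c : F) (M : Matrix (Fin 4) (Fin 4) F) :
    (c • M).mulVecLin = c • M.mulVecLin := by
  ext v i
  simp [Matrix.mulVecLin, Matrix.smul_mulVec]

theorem Mmat_diag (t : F) : Mmat F t 0 0 t = t^2 • (1 : Matrix (Fin 4) (Fin 4) F) := by
  ext i j
  fin_cases i <;> fin_cases j <;>
    simp [Mmat, Matrix.one_apply, Matrix.vecHead, Matrix.vecTail] <;> ring

theorem Mmat_mul_rev (a b c d : F) :
    Mmat F a b c d * Mmat F d (-b) (-c) a = (a*d - b*c)^2 • (1 : Matrix (Fin 4) (Fin 4) F) ∧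
    Mmat F d (-b) (-c) a * Mmat F a b c d = (a*d - b*c)^2 • (1 : Matrix (Fin 4) (Fin 4) F) := by
  rw [Mmat_mul, Mmat_mul]
  have h1 : a*d + c*(-b) = a*d - b*c := by ring
  have h2 : b*d + d*(-b) = 0 := by ring
  have h3 : a*(-c) + c*a = 0 := by ring
  have h4 : b*(-c) + d*a = a*d - b*c := by ring
  have h5 : d*a + (-c)*b = a*d - b*c := by ring
  have h6 : (-b)*a + a*b = 0 := by ring
  have h7 : d*c + (-c)*d = 0 := by ring
  have h8 : (-b)*c + a*d = a*d - b*c := by ring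
  rw [h1, h2, h3, h4, h5, h6, h7, h8, Mmat_diag]
  exact ⟨rfl, rfl⟩

/-- scalar • id maps every submodule to itself -/
theorem map_smul_id (c : F) (hc : c ≠ 0) (W : Submodule F (Fin 4 → F)) :
    W.map (c • (LinearMap.id : (Fin 4 → F) →ₗ[F] (Fin 4 → F))) = W := by
  ext x
  simp only [Submodule.mem_map, LinearMap.smul_apply, LinearMap.id_coe, id_eq]
  constructor
  · rintro ⟨y, hy, rfl⟩; exact W.smul_mem c hy
  · intro hx; exact ⟨c⁻¹ • x, W.smul_mem _ hx, by rw [smul_smul, mul_inv_cancel₀ hc, one_smul]⟩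

/-- The linear equivalence induced by `M(a,b,c,d)`. -/
noncomputable def mEquiv (a b c d : F) (h : a*d - b*c ≠ 0) :
    (Fin 4 → F) ≃ₗ[F] (Fin 4 → F) :=
  LinearEquiv.ofLinear (Mmat F a b c d).mulVecLin
    (((a*d - b*c)^2)⁻¹ • (Mmat F d (-b) (-c) a).mulVecLin)
    (by
      rw [LinearMap.comp_smul, ← Matrix.mulVecLin_mul, (Mmat_mul_rev a b c d).1,
        Mmat_smul, Matrix.mulVecLin_one, smul_smul, inv_mul_cancel₀ (pow_ne_zero 2 h), one_smul])
    (by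
      rw [LinearMap.smul_comp, ← Matrix.mulVecLin_mul, (Mmat_mul_rev a b c d).2,
        Mmat_smul, Matrix.mulVecLin_one, smul_smul, inv_mul_cancel₀ (pow_ne_zero 2 h), one_smul])

@[simp] theorem mEquiv_apply (a b c d : F) (h : a*d - b*c ≠ 0) (v : Fin 4 → F) :
    mEquiv a b c d h v = (Mmat F a b c d).mulVec v := rfl

/-- The collineation induced by `M(a,b,c,d)`. -/
noncomputable def gPerm (a b c d : F) (h : a*d - b*c ≠ 0) :
    Equiv.Perm (Submodule F (Fin 4 → F)) :=
  (Submodule.orderIsoMapComap (mEquiv a b c d h)).toEquiv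

theorem gPerm_apply (a b c d : F) (h : a*d - b*c ≠ 0) (W : Submodule F (Fin 4 → F)) :
    gPerm a b c d h W = W.map (mEquiv a b c d h).toLinearMap := rfl

theorem gPerm_mem (a b c d : F) (h : a*d - b*c ≠ 0) : gPerm a b c d h ∈ Gcoll F :=
  ⟨a, b, c, d, h, mEquiv a b c d h, fun _ => rfl, fun _ => rfl⟩

theorem gPerm_span (a b c d : F) (h : a*d - b*c ≠ 0) (v : Fin 4 → F) :
    gPerm a b c d h (Submodule.span F {v}) =
      Submodule.span F {(Mmat F a b c d).mulVec v} := by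
  rw [gPerm_apply, Submodule.map_span, Set.image_singleton]
  rfl

end Helpers2
section Helpers3
variable {F : Type} [Field F]

theorem two_ne_zero_of_odd_card [Fintype F] {q : ℕ} (hq : Fintype.card F = q)
    (hodd : Odd q) : (2 : F) ≠ 0 := by
  intro h2
  have hchar : ringChar F ∣ 2 := by
    have := ringChar.charP F
    exact (CharP.cast_eq_zero_iff F (ringChar F) 2).mp (by exact_mod_cast h2)
  have h2' : ringChar F = 1 ∨ ringChar F = 2 := (Nat.dvd_prime Nat.prime_two).mp hchar
  rcases h2' with h | h
  · exact CharP.ringChar_ne_one h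
  · have := FiniteField.even_card_of_char_two (F := F) h
    rw [hq] at this
    rcases hodd with ⟨k, rfl⟩
    omega

theorem mem_span_single {v x : Fin 4 → F} :
    x ∈ Submodule.span F {v} ↔ ∃ t : F, x = t • v := by
  rw [Submodule.mem_span_singleton]
  exact ⟨fun ⟨t, ht⟩ => ⟨t, ht.symm⟩, fun ⟨t, ht⟩ => ⟨t, ht.symm⟩⟩

theorem Fq_smul (lam t : F) (v : Fin 4 → F) : Fq F lam (t • v) = t^2 * Fq F lam v := by
  simp only [Fq, Pi.smul_apply, smul_eq_mul]; ring

theorem point_repr {P : Submodule F (Fin 4 → F)} (h : isPoint F P) :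
    ∃ v : Fin 4 → F, v ≠ 0 ∧ P = Submodule.span F {v} := by
  obtain ⟨v, hv0, hv⟩ := finrank_eq_one_iff'.mp h
  refine ⟨(v : Fin 4 → F), by simpa using hv0, le_antisymm ?_ ?_⟩
  · intro x hx
    obtain ⟨c, hc⟩ := hv ⟨x, hx⟩
    exact Submodule.mem_span_singleton.mpr ⟨c, congrArg Subtype.val hc⟩
  · rw [Submodule.span_le, Set.singleton_subset_iff]
    exact v.2

theorem span_mem_quadric_iff {lam : F} {v : Fin 4 → F} (hv : v ≠ 0) :
    Submodule.span F {v} ∈ quadric F lam ↔ Fq F lam v = 0 := by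
  constructor
  · intro ⟨_, h⟩
    exact h v (Submodule.mem_span_singleton_self v)
  · intro h
    refine ⟨finrank_span_singleton hv, fun u hu => ?_⟩
    obtain ⟨t, rfl⟩ := mem_span_single.mp hu
    rw [Fq_smul, h, mul_zero]

theorem span_mem_conic_iff {lam : F} {v : Fin 4 → F} (hv : v ≠ 0)
    (hq : Fq F lam v = 0) :
    Submodule.span F {v} ∈ conicC F ↔ v 3 = 0 := by
  constructor
  · intro ⟨_, hle⟩
    exact hle (Submodule.mem_span_singleton_self v)
  · intro h3
    constructor
    · rw [span_mem_quadric_iff hv]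
      have : Fq F 0 v = Fq F lam v := by simp [Fq, h3]
      rw [this, hq]
    · intro u hu
      obtain ⟨t, rfl⟩ := mem_span_single.mp hu
      show (t • v) 3 = 0
      simp [h3]

end Helpers3
section Helpers4
variable {F : Type} [Field F]

theorem Mmat_smul_params (t a b c d : F) :
    Mmat F (t*a) (t*b) (t*c) (t*d) = t^2 • Mmat F a b c d := by
  ext i j
  fin_cases i <;> fin_cases j <;>
    simp [Mmat, Matrix.vecHead, Matrix.vecTail] <;> ring

theorem gPerm_congr {a b c d a' b' c' d' : F} (ha : a = a') (hb : b = b')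
    (hc : c = c') (hd : d = d') (h : a*d - b*c ≠ 0) (h' : a'*d' - b'*c' ≠ 0) :
    gPerm a b c d h = gPerm a' b' c' d' h' := by
  subst ha hb hc hd; rfl

theorem gPerm_mul (a b c d a' b' c' d' : F) (h : a*d - b*c ≠ 0) (h' : a'*d' - b'*c' ≠ 0)
    (h'' : (a*a'+c*b')*(b*c'+d*d') - (b*a'+d*b')*(a*c'+c*d') ≠ 0) :
    gPerm a b c d h * gPerm a' b' c' d' h' =
      gPerm (a*a'+c*b') (b*a'+d*b') (a*c'+c*d') (b*c'+d*d') h'' := by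
  apply Equiv.ext
  intro W
  show gPerm a b c d h (gPerm a' b' c' d' h' W) = _
  rw [gPerm_apply, gPerm_apply, gPerm_apply, ← Submodule.map_comp]
  congr 1
  apply LinearMap.ext
  intro v
  show (Mmat F a b c d).mulVec ((Mmat F a' b' c' d').mulVec v) = _
  rw [Matrix.mulVec_mulVec, Mmat_mul]
  rfl

theorem gPerm_diag_eq_one (t : F) (h : t*t - 0*0 ≠ 0) :
    gPerm t 0 0 t h = 1 := by
  have ht : t ≠ 0 := fun h0 => h (by rw [h0]; ring)
  apply Equiv.ext
  intro W
  show gPerm t 0 0 t h W = W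
  rw [gPerm_apply]
  have key : (mEquiv t 0 0 t h).toLinearMap =
      (t^2) • (LinearMap.id : (Fin 4 → F) →ₗ[F] (Fin 4 → F)) := by
    apply LinearMap.ext
    intro v
    show (Mmat F t 0 0 t).mulVec v = _
    rw [Mmat_diag, Matrix.smul_mulVec, Matrix.one_mulVec]
    rfl
  rw [key, map_smul_id _ (pow_ne_zero 2 ht)]

theorem gPerm_scal (t a b c d : F) (ht : t ≠ 0) (h : a*d - b*c ≠ 0)
    (h2 : (t*a)*(t*d) - (t*b)*(t*c) ≠ 0) :
    gPerm (t*a) (t*b) (t*c) (t*d) h2 = gPerm a b c d h := by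
  apply Equiv.ext
  intro W
  rw [gPerm_apply, gPerm_apply]
  have key : (mEquiv (t*a) (t*b) (t*c) (t*d) h2).toLinearMap =
      ((t^2) • (LinearMap.id : (Fin 4 → F) →ₗ[F] (Fin 4 → F))) ∘ₗ
        (mEquiv a b c d h).toLinearMap := by
    apply LinearMap.ext
    intro v
    show (Mmat F (t*a) (t*b) (t*c) (t*d)).mulVec v = _
    rw [Mmat_smul_params, Matrix.smul_mulVec]
    rfl
  rw [key, Submodule.map_comp, map_smul_id _ (pow_ne_zero 2 ht)]

theorem mem_Gcoll_iff {σ : Equiv.Perm (Submodule F (Fin 4 → F))} :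
    σ ∈ Gcoll F ↔ ∃ (a b c d : F) (h : a*d - b*c ≠ 0), σ = gPerm a b c d h := by
  constructor
  · rintro ⟨a, b, c, d, h, e, he, hW⟩
    refine ⟨a, b, c, d, h, Equiv.ext fun W => ?_⟩
    rw [hW W, gPerm_apply]
    congr 1
    apply LinearMap.ext
    intro v
    exact he v
  · rintro ⟨a, b, c, d, h, rfl⟩
    exact gPerm_mem a b c d h

theorem gPerm_inv (a b c d : F) (h : a*d - b*c ≠ 0)
    (h' : d*a - (-b)*(-c) ≠ 0) :
    (gPerm a b c d h)⁻¹ = gPerm d (-b) (-c) a h' := by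
  apply inv_eq_of_mul_eq_one_right
  have h'' : (a*d+c*(-b))*(b*(-c)+d*a) - (b*d+d*(-b))*(a*(-c)+c*a) ≠ 0 := by
    intro h0
    apply h
    have : (a*d+c*(-b))*(b*(-c)+d*a) - (b*d+d*(-b))*(a*(-c)+c*a) = (a*d-b*c)^2 := by ring
    rw [this] at h0
    exact pow_eq_zero_iff (n := 2) (by norm_num) |>.mp h0
  rw [gPerm_mul a b c d d (-b) (-c) a h h' h'']
  have e1 : a*d+c*(-b) = a*d - b*c := by ring
  have e2 : b*d+d*(-b) = 0 := by ring
  have e3 : a*(-c)+c*a = 0 := by ring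
  have e4 : b*(-c)+d*a = a*d - b*c := by ring
  have hdd : (a*d-b*c)*(a*d-b*c) - 0*0 ≠ 0 :=
    fun h0 => h (mul_self_eq_zero.mp (by linear_combination h0))
  rw [gPerm_congr e1 e2 e3 e4 h'' hdd]
  exact gPerm_diag_eq_one _ _

theorem mem_G_iff {σ : Equiv.Perm (Submodule F (Fin 4 → F))} :
    σ ∈ G F ↔ σ ∈ Gcoll F := by
  constructor
  · intro hσ
    induction hσ using Subgroup.closure_induction with
    | mem x hx => exact hx
    | one => exact mem_Gcoll_iff.mpr ⟨1, 0, 0, 1, by norm_num, (gPerm_diag_eq_one 1 (by norm_num)).symm⟩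
    | mul x y _ _ hx hy =>
        obtain ⟨a, b, c, d, h, rfl⟩ := mem_Gcoll_iff.mp hx
        obtain ⟨a', b', c', d', h', rfl⟩ := mem_Gcoll_iff.mp hy
        have h'' : (a*a'+c*b')*(b*c'+d*d') - (b*a'+d*b')*(a*c'+c*d') ≠ 0 := by
          intro h0
          have : (a*a'+c*b')*(b*c'+d*d') - (b*a'+d*b')*(a*c'+c*d')
              = (a*d-b*c)*(a'*d'-b'*c') := by ring
          rw [this] at h0
          rcases mul_eq_zero.mp h0 with hh | hh
          exacts [h hh, h' hh]
        rw [gPerm_mul a b c d a' b' c' d' h h' h'']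
        exact gPerm_mem _ _ _ _ _
    | inv x _ hx =>
        obtain ⟨a, b, c, d, h, rfl⟩ := mem_Gcoll_iff.mp hx
        have h' : d*a - (-b)*(-c) ≠ 0 := by
          intro h0; apply h; linear_combination h0
        rw [gPerm_inv a b c d h h']
        exact gPerm_mem _ _ _ _ _
  · exact fun hσ => Subgroup.subset_closure hσ

end Helpers4
section Helpers5
variable {F : Type} [Field F]

theorem Mmat_mulVec_v0 (a b c d μ : F) :
    (Mmat F a b c d).mulVec ![0, μ, 0, 1] =
      ![2*a*c*μ, (a*d+b*c)*μ, 2*b*d*μ, a*d-b*c] := by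
  funext i
  fin_cases i <;>
    simp [Mmat, Matrix.mulVec, dotProduct, Fin.sum_univ_four] <;> ring

theorem trans_core (μ : F) (hμ : μ ≠ 0) (h2 : (2:F) ≠ 0)
    (v : Fin 4 → F) (hs : v 3 ≠ 0) (hf : Fq F (μ*μ) v = 0) :
    ∃ (a b c d : F) (h : a*d - b*c ≠ 0) (ρ : F), ρ ≠ 0 ∧
      (Mmat F a b c d).mulVec ![0, μ, 0, 1] = ρ • v := by
  set x1 := v 0 with hx1
  set x2 := v 1 with hx2
  set x3 := v 2 with hx3
  set s := v 3 with hs'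
  have hfq : x1 * x3 = (x2 - μ*s) * (x2 + μ*s) := by
    have h0 : x1 * x3 - x2^2 + (μ*μ) * s^2 = 0 := hf
    linear_combination h0
  have h2μs : 2*μ*s ≠ 0 := by
    intro h0
    rcases mul_eq_zero.mp h0 with h0 | h0
    · rcases mul_eq_zero.mp h0 with h0 | h0
      exacts [h2 h0, hμ h0]
    · exact hs h0
  by_cases hy : x2 - μ*s ≠ 0
  · refine ⟨x1, x2 - μ*s, x2 - μ*s, x3, ?_, 2*μ*(x2 - μ*s), mul_ne_zero (mul_ne_zero h2 hμ) hy, ?_⟩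
    · have he : x1 * x3 - (x2 - μ*s) * (x2 - μ*s) = (x2 - μ*s) * (2*μ*s) := by
        linear_combination hfq
      rw [he]
      exact mul_ne_zero hy h2μs
    · rw [Mmat_mulVec_v0]
      funext i
      fin_cases i <;> simp <;>
        first
          | ring1
          | linear_combination μ * hfq
          | linear_combination hfq
  · push_neg at hy
    have hz : x2 + μ*s = 2*μ*s := by linear_combination hy
    by_cases hx10 : x1 ≠ 0
    · have hx30 : x3 = 0 := by
        rcases mul_eq_zero.mp (by rw [hfq, hy]; ring : x1 * x3 = 0) with h0 | h0
        · exact absurd h0 hx10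
        · exact h0
      refine ⟨1, 0, x1, x2 + μ*s, ?_, 2*μ, mul_ne_zero h2 hμ, ?_⟩
      · have he : 1*(x2 + μ*s) - 0*x1 = 2*μ*s := by linear_combination hz
        rw [he]; exact h2μs
      · rw [Mmat_mulVec_v0]
        funext i
        fin_cases i <;> simp <;>
          first
            | ring1
            | linear_combination μ * hz
            | linear_combination (2*μ) * hx30
            | linear_combination hz
            | linear_combination μ * hz + 2*μ*hx30
            | linear_combination (-2*μ)*hx30 + (-2*μ)*hy
            | (right; linear_combination hx30)
            | linear_combination (-μ)*hy
    · push_neg at hx10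
      refine ⟨x2 + μ*s, x3, 0, 1, ?_, 2*μ, mul_ne_zero h2 hμ, ?_⟩
      · have he : (x2 + μ*s)*1 - x3*0 = 2*μ*s := by linear_combination hz
        rw [he]; exact h2μs
      · rw [Mmat_mulVec_v0]
        funext i
        fin_cases i <;> simp <;>
          first
            | ring1
            | linear_combination μ * hz
            | linear_combination (2*μ) * hx10
            | linear_combination hz
            | linear_combination μ * hz + 2*μ*hx10
            | linear_combination (-2*μ)*hx10 + (-2*μ)*hy
            | (right; linear_combination hx10)
            | linear_combination (-μ)*hy

end Helpers5
section Helpers6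
variable {F : Type} [Field F]

theorem pair_count_ne [Fintype F] [DecidableEq F] {q : ℕ} (hq : Fintype.card F = q)
    (c : F) (hc : c ≠ 0) :
    Nat.card {p : F × F // p.1 * p.2 = c} = q - 1 := by
  have e : {p : F × F // p.1 * p.2 = c} ≃ Fˣ :=
    { toFun := fun p => Units.mk0 p.1.1 (fun h0 => hc (by rw [← p.2, h0, zero_mul]))
      invFun := fun u => ⟨((u : F), (u : F)⁻¹ * c), by
        rw [mul_comm ((u:F))⁻¹ c, mul_comm, mul_assoc, inv_mul_cancel₀ u.ne_zero, mul_one]⟩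
      left_inv := fun ⟨⟨x, y⟩, hxy⟩ => by
        have hx : x ≠ 0 := fun h0 => hc (by rw [← hxy, h0, zero_mul])
        ext
        · rfl
        · show x⁻¹ * c = y
          rw [← hxy, ← mul_assoc, inv_mul_cancel₀ hx, one_mul]
      right_inv := fun u => Units.ext rfl }
  rw [Nat.card_congr e, Nat.card_eq_fintype_card, Fintype.card_units, hq]

theorem pair_count_zero [Fintype F] [DecidableEq F] {q : ℕ} (hq : Fintype.card F = q) :
    Nat.card {p : F × F // p.1 * p.2 = (0:F)} = 2 * q - 1 := by
  have e : {p : F × F // p.1 * p.2 = (0:F)} ≃ F ⊕ {x : F // x ≠ 0} :=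
    { toFun := fun p =>
        if h : p.1.1 = 0 then Sum.inl p.1.2 else Sum.inr ⟨p.1.1, h⟩
      invFun := fun x => match x with
        | Sum.inl y => ⟨(0, y), by simp⟩
        | Sum.inr x => ⟨(x.1, 0), by simp⟩
      left_inv := fun p => by
        by_cases h : p.1.1 = 0
        · simp only [h, dif_pos]
          ext
          · exact h.symm
          · rfl
        · simp only [h, dif_neg, not_false_iff]
          ext
          · rfl
          · exact ((mul_eq_zero.mp p.2).resolve_left h).symm
      right_inv := fun x => by
        match x with
        | Sum.inl y => simp
        | Sum.inr x => simp [x.2] }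
  rw [Nat.card_congr e, Nat.card_eq_fintype_card]
  rw [Fintype.card_sum, Fintype.card_congr (unitsEquivNeZero (G₀ := F)).symm,
    Fintype.card_units, hq]
  have : 1 ≤ q := by rw [← hq]; exact Fintype.card_pos
  omega

theorem sq_eq_iff {μ y : F} (h2 : (2:F) ≠ 0) (hμ : μ ≠ 0) :
    y^2 - μ*μ = 0 ↔ y = μ ∨ y = -μ := by
  constructor
  · intro h
    have : (y - μ) * (y + μ) = 0 := by linear_combination h
    rcases mul_eq_zero.mp this with h0 | h0
    · left; linear_combination h0
    · right; linear_combination h0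
  · rintro (rfl | rfl) <;> ring

theorem count_triples [Fintype F] {q : ℕ} (hq : Fintype.card F = q) (hodd : Odd q)
    (h2 : (2:F) ≠ 0) (μ : F) (hμ : μ ≠ 0) :
    Nat.card {t : F × F × F // t.1 * t.2.2 - t.2.1^2 + μ*μ = 0} = q^2 + q := by
  classical
  have e : {t : F × F × F // t.1 * t.2.2 - t.2.1^2 + μ*μ = 0} ≃
      Σ y : F, {p : F × F // p.1 * p.2 = y^2 - μ*μ} :=
    { toFun := fun t => ⟨t.1.2.1, ⟨(t.1.1, t.1.2.2), by linear_combination t.2⟩⟩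
      invFun := fun x => ⟨(x.2.1.1, x.1, x.2.1.2), by linear_combination x.2.2⟩
      left_inv := fun t => rfl
      right_inv := fun x => rfl }
  rw [Nat.card_congr e, Nat.card_eq_fintype_card, Fintype.card_sigma]
  have hcard : ∀ y : F, Fintype.card {p : F × F // p.1 * p.2 = y^2 - μ*μ} =
      if y = μ ∨ y = -μ then 2*q - 1 else q - 1 := by
    intro y
    by_cases hy : y = μ ∨ y = -μ
    · rw [if_pos hy]
      have h0 : y^2 - μ*μ = 0 := by rcases hy with rfl | rfl <;> ring
      rw [← Nat.card_eq_fintype_card, h0]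
      exact pair_count_zero hq
    · rw [if_neg hy]
      have h0 : y^2 - μ*μ ≠ 0 := fun h => hy ((sq_eq_iff h2 hμ).mp h)
      rw [← Nat.card_eq_fintype_card]
      exact pair_count_ne hq _ h0
  rw [Finset.sum_congr rfl (fun y _ => hcard y)]
  rw [Finset.sum_ite, Finset.sum_const, Finset.sum_const]
  have hfil : Finset.filter (fun y : F => y = μ ∨ y = -μ) Finset.univ = {μ, -μ} := by
    ext y
    simp [Finset.mem_filter]
  have hne : μ ≠ -μ := by
    intro h
    apply hμ
    have : 2 * μ = 0 := by linear_combination h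
    rcases mul_eq_zero.mp this with h0 | h0
    · exact absurd h0 h2
    · exact h0
  have hcard2 : (Finset.filter (fun y : F => y = μ ∨ y = -μ) Finset.univ).card = 2 := by
    rw [hfil, Finset.card_insert_of_notMem (by simp [hne]), Finset.card_singleton]
  have hcardc : (Finset.filter (fun y : F => ¬(y = μ ∨ y = -μ)) Finset.univ).card = q - 2 := by
    have := Finset.card_filter_add_card_filter_not (s := (Finset.univ : Finset F))
      (p := fun y : F => y = μ ∨ y = -μ)
    rw [Finset.card_univ, hq, hcard2] at this
    omega
  rw [hcard2, hcardc]
  have hq3 : 3 ≤ q := by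
    have h1 : 1 < q := by rw [← hq]; exact Fintype.one_lt_card
    obtain ⟨k, rfl⟩ := hodd
    omega
  obtain ⟨m, rfl⟩ : ∃ m, q = m + 3 := ⟨q - 3, by omega⟩
  have e1 : 2 * (m + 3) - 1 = 2*m + 5 := by omega
  have e2 : m + 3 - 2 = m + 1 := by omega
  have e3 : m + 3 - 1 = m + 2 := by omega
  rw [e1, e2, e3]
  simp only [smul_eq_mul]
  ring

end Helpers6
section Helpers7
variable {F : Type} [Field F]

private theorem vec_ne_zero (x1 x2 x3 : F) : (![x1, x2, x3, 1] : Fin 4 → F) ≠ 0 := by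
  intro h
  have := congrFun h 3
  simp at this

private theorem Fq_vec (lam x1 x2 x3 : F) :
    Fq F lam ![x1, x2, x3, 1] = x1 * x3 - x2^2 + lam := by
  simp [Fq]

theorem quadric_diff_mem_iff {lam : F} (x1 x2 x3 : F)
    (hcond : x1 * x3 - x2^2 + lam = 0) :
    Submodule.span F {(![x1, x2, x3, 1] : Fin 4 → F)} ∈ quadric F lam \ conicC F := by
  have hv := vec_ne_zero x1 x2 x3
  have hfq : Fq F lam ![x1, x2, x3, 1] = 0 := by rw [Fq_vec]; exact hcond
  constructor
  · exact (span_mem_quadric_iff hv).mpr hfq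
  · intro hc
    have := (span_mem_conic_iff hv hfq).mp hc
    simp at this

theorem card_quadric_diff [Fintype F] {q : ℕ} (hq : Fintype.card F = q) (hodd : Odd q)
    (h2 : (2:F) ≠ 0) (μ : F) (hμ : μ ≠ 0) :
    (quadric F (μ*μ) \ conicC F).ncard = q^2 + q := by
  classical
  set lam := μ*μ with hlam
  let Ψ : {t : F × F × F // t.1 * t.2.2 - t.2.1^2 + lam = 0} →
      ↥(quadric F lam \ conicC F) :=
    fun t => ⟨Submodule.span F {![t.1.1, t.1.2.1, t.1.2.2, 1]},
      quadric_diff_mem_iff _ _ _ t.2⟩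
  have hbij : Function.Bijective Ψ := by
    constructor
    · rintro ⟨⟨x1, x2, x3⟩, ht⟩ ⟨⟨y1, y2, y3⟩, ht'⟩ h
      have hspan : Submodule.span F {(![x1, x2, x3, 1] : Fin 4 → F)} =
          Submodule.span F {(![y1, y2, y3, 1] : Fin 4 → F)} := congrArg Subtype.val h
      have hmem : (![x1, x2, x3, 1] : Fin 4 → F) ∈
          Submodule.span F {(![y1, y2, y3, 1] : Fin 4 → F)} := by
        rw [← hspan]; exact Submodule.mem_span_singleton_self _
      obtain ⟨c, hc⟩ := mem_span_single.mp hmem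
      have h3 := congrFun hc 3
      simp at h3
      have h0 := congrFun hc 0
      have h1 := congrFun hc 1
      have h2' := congrFun hc 2
      simp [← h3] at h0 h1 h2'
      simp only [Subtype.mk.injEq, Prod.mk.injEq]
      exact ⟨h0, h1, h2'⟩
    · rintro ⟨P, hP, hPc⟩
      obtain ⟨v, hv, rfl⟩ := point_repr hP.1
      have hfq : Fq F lam v = 0 := hP.2 v (Submodule.mem_span_singleton_self v)
      have hv3 : v 3 ≠ 0 := by
        intro h3
        exact hPc ((span_mem_conic_iff hv hfq).mpr h3)
      set w : Fin 4 → F := (v 3)⁻¹ • v with hw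
      have hw3 : w 3 = 1 := by
        simp [hw, inv_mul_cancel₀ hv3]
      have hweq : w = ![w 0, w 1, w 2, 1] := by
        funext i
        fin_cases i <;> simp [hw3] <;> rfl
      have hwspan : Submodule.span F {v} = Submodule.span F {w} := by
        rw [hw]
        exact (Submodule.span_singleton_smul_eq (IsUnit.mk0 _ (inv_ne_zero hv3)) v).symm
      have hfqw : Fq F lam w = 0 := by
        rw [hw, Fq_smul, hfq, mul_zero]
      have hcond : w 0 * w 2 - (w 1)^2 + lam = 0 := by
        have := hfqw
        rw [hweq, Fq_vec] at this
        exact this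
      refine ⟨⟨(w 0, w 1, w 2), hcond⟩, ?_⟩
      apply Subtype.ext
      show Submodule.span F {![w 0, w 1, w 2, 1]} = Submodule.span F {v}
      rw [hwspan, ← hweq]
  have h1 : (quadric F lam \ conicC F).ncard =
      Nat.card {t : F × F × F // t.1 * t.2.2 - t.2.1^2 + lam = 0} := by
    rw [← Nat.card_coe_set_eq]
    exact (Nat.card_congr (Equiv.ofBijective Ψ hbij)).symm
  rw [h1, count_triples hq hodd h2 μ hμ]

end Helpers7
section Helpers8
variable {F : Type} [Field F]

theorem exists_g (μ : F) (hμ : μ ≠ 0) (h2 : (2:F) ≠ 0)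
    {P : Submodule F (Fin 4 → F)} (hP : P ∈ quadric F (μ*μ) \ conicC F) :
    ∃ σ : Equiv.Perm (Submodule F (Fin 4 → F)), σ ∈ Gcoll F ∧
      σ (Submodule.span F {(![0, μ, 0, 1] : Fin 4 → F)}) = P := by
  obtain ⟨v, hv, rfl⟩ := point_repr hP.1.1
  have hfq : Fq F (μ*μ) v = 0 := hP.1.2 v (Submodule.mem_span_singleton_self v)
  have hv3 : v 3 ≠ 0 := fun h3 => hP.2 ((span_mem_conic_iff hv hfq).mpr h3)
  obtain ⟨a, b, c, d, h, ρ, hρ, heq⟩ := trans_core μ hμ h2 v hv3 hfq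
  refine ⟨gPerm a b c d h, gPerm_mem a b c d h, ?_⟩
  rw [gPerm_span, heq]
  exact Submodule.span_singleton_smul_eq (IsUnit.mk0 ρ hρ) v

theorem Mmat_diag_mulVec_v0 (r μ : F) :
    (Mmat F r 0 0 1).mulVec ![0, μ, 0, 1] = r • ![0, μ, 0, 1] := by
  rw [Mmat_mulVec_v0]
  funext i
  fin_cases i <;> simp <;> ring

theorem Mmat_mulVec_e01 (a b c d : F) :
    (Mmat F a b c d).mulVec ![1, 1, 0, 0] =
      ![a^2 + 2*a*c, a*b + (a*d + b*c), b^2 + 2*b*d, 0] := by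
  rw [Mmat_mulVec]
  funext i
  fin_cases i <;> simp <;> ring

theorem stab_card_P0 [Fintype F] {q : ℕ} (hq : Fintype.card F = q)
    (μ : F) (hμ : μ ≠ 0) (h2 : (2:F) ≠ 0) :
    Nat.card (MulAction.stabilizer (G F)
      (Submodule.span F {(![0, μ, 0, 1] : Fin 4 → F)})) = q - 1 := by
  classical
  set P0 : Submodule F (Fin 4 → F) := Submodule.span F {(![0, μ, 0, 1] : Fin 4 → F)} with hP0
  have hdet : ∀ r : Fˣ, (r:F)*1 - 0*0 ≠ 0 := by
    intro r
    simpa using r.ne_zero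
  let f : Fˣ → MulAction.stabilizer (G F) P0 := fun r =>
    ⟨⟨gPerm (r:F) 0 0 1 (hdet r), mem_G_iff.mpr (gPerm_mem _ _ _ _ _)⟩,
      by
        rw [MulAction.mem_stabilizer_iff]
        show gPerm (r:F) 0 0 1 (hdet r) • P0 = P0
        rw [Equiv.Perm.smul_def, hP0, gPerm_span, Mmat_diag_mulVec_v0]
        exact Submodule.span_singleton_smul_eq r.isUnit _⟩
  have hbij : Function.Bijective f := by
    constructor
    · intro r r' hrr
      have hperm : gPerm (r:F) 0 0 1 (hdet r) = gPerm (r':F) 0 0 1 (hdet r') :=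
        congrArg Subtype.val (congrArg Subtype.val hrr)
      have hW := congrArg (fun σ : Equiv.Perm (Submodule F (Fin 4 → F)) =>
        σ (Submodule.span F {(![1, 1, 0, 0] : Fin 4 → F)})) hperm
      simp only [gPerm_span, Mmat_mulVec_e01] at hW
      have hmem : (![(r:F)^2 + 2*(r:F)*0, (r:F)*0 + ((r:F)*1 + 0*0), 0^2 + 2*0*1, 0] : Fin 4 → F) ∈
          Submodule.span F {(![(r':F)^2 + 2*(r':F)*0, (r':F)*0 + ((r':F)*1 + 0*0), 0^2 + 2*0*1, 0] : Fin 4 → F)} := by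
        rw [← hW]
        exact Submodule.mem_span_singleton_self _
      obtain ⟨t, ht⟩ := mem_span_single.mp hmem
      have e0 : (r:F)^2 + 2*(r:F)*0 = t * ((r':F)^2 + 2*(r':F)*0) := congrFun ht 0
      have e1 : (r:F)*0 + ((r:F)*1 + 0*0) = t * ((r':F)*0 + ((r':F)*1 + 0*0)) := congrFun ht 1
      have hr2 : (r:F)^2 = t * (r':F)^2 := by linear_combination e0
      have hr1 : (r:F) = t * (r':F) := by linear_combination e1
      have ht1 : t = 1 := by
        have hrne := r.ne_zero
        have hrne' := r'.ne_zero
        have htne : t ≠ 0 := by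
          intro h0
          rw [h0, zero_mul] at hr1
          exact hrne hr1
        have : t^2 * (r':F)^2 = t * (r':F)^2 := by
          rw [← hr2, hr1]; ring
        have h3 : (t^2 - t) * (r':F)^2 = 0 := by linear_combination this
        rcases mul_eq_zero.mp h3 with h4 | h4
        · have : t * (t - 1) = 0 := by linear_combination h4
          rcases mul_eq_zero.mp this with h5 | h5
          · exact absurd h5 htne
          · linear_combination h5
        · exact absurd h4 (pow_ne_zero 2 hrne')
      apply Units.ext
      rw [hr1, ht1, one_mul]
    · rintro ⟨⟨σ, hσG⟩, hσfix⟩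
      obtain ⟨a, b, c, d, h, rfl⟩ := mem_Gcoll_iff.mp (mem_G_iff.mp hσG)
      have hfixP : gPerm a b c d h P0 = P0 := by
        have h1 := MulAction.mem_stabilizer_iff.mp hσfix
        exact h1
      rw [hP0, gPerm_span] at hfixP
      have hmem : (Mmat F a b c d).mulVec ![0, μ, 0, 1] ∈
          Submodule.span F {(![0, μ, 0, 1] : Fin 4 → F)} := by
        rw [← hfixP]
        exact Submodule.mem_span_singleton_self _
      obtain ⟨t, ht⟩ := mem_span_single.mp hmem
      rw [Mmat_mulVec_v0] at ht
      have e0 : 2*a*c*μ = t * 0 := congrFun ht 0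
      have e1 : (a*d+b*c)*μ = t * μ := congrFun ht 1
      have e2 : 2*b*d*μ = t * 0 := congrFun ht 2
      have e3 : a*d - b*c = t * 1 := congrFun ht 3
      have hac : a * c = 0 := by
        have : (2*μ) * (a*c) = 0 := by linear_combination e0
        rcases mul_eq_zero.mp this with h0 | h0
        · exact absurd h0 (mul_ne_zero h2 hμ)
        · exact h0
      have hbd : b * d = 0 := by
        have : (2*μ) * (b*d) = 0 := by linear_combination e2
        rcases mul_eq_zero.mp this with h0 | h0
        · exact absurd h0 (mul_ne_zero h2 hμ)
        · exact h0
      have hbc : b * c = 0 := by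
        have h4 : (a*d+b*c) = t := by
          have := mul_right_cancel₀ hμ (by linear_combination e1 : (a*d+b*c)*μ = t*μ)
          exact this
        have : 2 * (b*c) = 0 := by linear_combination h4 - e3
        rcases mul_eq_zero.mp this with h0 | h0
        · exact absurd h0 h2
        · exact h0
      have hc0 : c = 0 := by
        by_contra hcne
        have ha0 : a = 0 := (mul_eq_zero.mp hac).resolve_right hcne
        have hb0 : b = 0 := (mul_eq_zero.mp hbc).resolve_right hcne
        exact h (by rw [ha0, hb0]; ring)
      have hb0 : b = 0 := by
        by_contra hbne
        have hd0 : d = 0 := (mul_eq_zero.mp hbd).resolve_left hbne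
        exact h (by rw [hd0, hc0]; ring)
      have had : a * d ≠ 0 := by
        intro h0
        exact h (by rw [hc0, hb0]; linear_combination h0)
      have ha : a ≠ 0 := fun h0 => had (by rw [h0, zero_mul])
      have hd : d ≠ 0 := fun h0 => had (by rw [h0, mul_zero])
      refine ⟨Units.mk0 (a * d⁻¹) (mul_ne_zero ha (inv_ne_zero hd)), ?_⟩
      apply Subtype.ext
      apply Subtype.ext
      show gPerm ((Units.mk0 (a * d⁻¹) _ : Fˣ) : F) 0 0 1 _ = gPerm a b c d h
      have hstep1 : gPerm a b c d h = gPerm a 0 0 d (by rw [hb0, hc0] at h; exact h) :=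
        gPerm_congr rfl hb0 hc0 rfl _ _
      have hdd : (d*(a*d⁻¹))*(d*1) - (d*0)*(d*0) ≠ 0 := by
        have : (d*(a*d⁻¹))*(d*1) - (d*0)*(d*0) = a*d := by
          field_simp
          ring
        rw [this]; exact had
      have hstep2 : gPerm (d*(a*d⁻¹)) (d*0) (d*0) (d*1) hdd =
          gPerm ((a*d⁻¹)) 0 0 1 (hdet (Units.mk0 (a * d⁻¹) (mul_ne_zero ha (inv_ne_zero hd)))) :=
        gPerm_scal d _ _ _ _ hd _ _
      have hstep3 : gPerm (d*(a*d⁻¹)) (d*0) (d*0) (d*1) hdd =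
          gPerm a 0 0 d (by rw [hb0, hc0] at h; exact h) := by
        apply gPerm_congr
        · field_simp
        · ring
        · ring
        · ring
      rw [hstep1, ← hstep3, hstep2]
      rfl
  rw [← Nat.card_congr (Equiv.ofBijective f hbij), Nat.card_eq_fintype_card,
    Fintype.card_units, hq]

end Helpers8
theorem statement_2 {F : Type} [Field F] [Fintype F] (q : ℕ)
    (hq : Fintype.card F = q) (hodd : Odd q)
    (lam : F) (hlam0 : lam ≠ 0) (hlamsq : IsSquare lam) :
    (∀ P ∈ quadric F lam \ conicC F, ∀ P' ∈ quadric F lam \ conicC F,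
      ∃ g ∈ G F, g • P = P') ∧
    (quadric F lam \ conicC F).ncard = q ^ 2 + q ∧
    (∀ P ∈ quadric F lam \ conicC F,
      Nat.card (MulAction.stabilizer (G F) P) = q - 1) := by
  obtain ⟨μ, rfl⟩ := hlamsq
  have hμ : μ ≠ 0 := fun h0 => hlam0 (by rw [h0, mul_zero])
  have h2 : (2:F) ≠ 0 := two_ne_zero_of_odd_card hq hodd
  refine ⟨?_, card_quadric_diff hq hodd h2 μ hμ, ?_⟩
  · intro P hP P' hP'
    obtain ⟨σ, hσ, hσP⟩ := exists_g μ hμ h2 hP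
    obtain ⟨σ', hσ', hσP'⟩ := exists_g μ hμ h2 hP'
    refine ⟨σ' * σ⁻¹, mul_mem (mem_G_iff.mpr hσ') (inv_mem (mem_G_iff.mpr hσ)), ?_⟩
    rw [Equiv.Perm.smul_def]
    show σ' (σ⁻¹ P) = P'
    rw [← hσP, Equiv.Perm.inv_def, Equiv.symm_apply_apply, hσP']
  · intro P hP
    obtain ⟨σ, hσ, hσP⟩ := exists_g μ hμ h2 hP
    set P0 : Submodule F (Fin 4 → F) := Submodule.span F {(![0, μ, 0, 1] : Fin 4 → F)} with hP0def
    have hPeq : P = (⟨σ, mem_G_iff.mpr hσ⟩ : ↥(G F)) • P0 := by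
      show P = σ • P0
      rw [Equiv.Perm.smul_def, hσP]
    rw [hPeq, MulAction.stabilizer_smul_eq_stabilizer_map_conj]
    have hinj : Function.Injective
        ⇑((MulAut.conj (⟨σ, mem_G_iff.mpr hσ⟩ : ↥(G F))).toMonoidHom) :=
      (MulAut.conj (⟨σ, mem_G_iff.mpr hσ⟩ : ↥(G F))).injective
    have hcard : Nat.card (Subgroup.map
        ((MulAut.conj (⟨σ, mem_G_iff.mpr hσ⟩ : ↥(G F))).toMonoidHom)
        (MulAction.stabilizer (G F) P0)) = Nat.card (MulAction.stabilizer (G F) P0) :=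
      (Nat.card_congr (Subgroup.equivMapOfInjective
        (MulAction.stabilizer (G F) P0)
        ((MulAut.conj (⟨σ, mem_G_iff.mpr hσ⟩ : ↥(G F))).toMonoidHom) hinj).toEquiv).symm
    rw [hcard]
    exact stab_card_P0 hq μ hμ h2
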